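/- Let (V,q) be a nondegenerate quadratic space over a field F and τ an isometry with (τ - id)² = 0. Let U be a 2-dimensional subspace of V. If U ⊆ R(τ) and the restriction of the Wall form ω_τ to U is a hyperbolic plane (there is a basis (x,w) of U with ω_τ(x,x) = ω_τ(w,w) = 0, ω_τ(x,w) = 1, ω_τ(w,x) = -1), then there exists a 4-dimensional regular τ-invariant subspace V' of V such that τ restricted to V' is an interchange isometry with R(τ|_{V'}) = U. -/
import Mathlib


theorem wall_stmt14 {F V : Type*} [Field F] [AddCommGroup V] [Module F V]
    [FiniteDimensional F V] (q : QuadraticForm F V)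
    (hq : LinearMap.BilinForm.Nondegenerate (QuadraticMap.polarBilin q))
    (τ : V →ₗ[F] V) (hτ : ∀ x, q (τ x) = q x)
    (h2 : (τ - LinearMap.id) ∘ₗ (τ - LinearMap.id) = 0)
    (U : Submodule F V) (hU2 : Module.finrank F U = 2)
    (hUR : U ≤ LinearMap.range (τ - LinearMap.id))
    (x w a b : V) (ha : τ a - a = x) (hb : τ b - b = w)
    (hspan : Submodule.span F {x, w} = U) (hind : LinearIndependent F ![x, w])
    (hxx : QuadraticMap.polarBilin q x a = 0)
    (hww : QuadraticMap.polarBilin q w b = 0)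
    (hxw : QuadraticMap.polarBilin q x b = 1)
    (hwx : QuadraticMap.polarBilin q w a = -1) :
    ∃ V' : Submodule F V, Module.finrank F V' = 4 ∧
      V' ⊓ LinearMap.BilinForm.orthogonal (QuadraticMap.polarBilin q) V' = ⊥ ∧
      (∀ v ∈ V', τ v ∈ V') ∧
      Submodule.map (τ - LinearMap.id) V' = U ∧
      Module.finrank F ↥(LinearMap.ker (τ - LinearMap.id) ⊓ V') = 2 ∧
      ∀ v ∈ LinearMap.ker (τ - LinearMap.id) ⊓ V', q v = 0 := by
  classical
  set B := QuadraticMap.polarBilin q with hBdef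
  have hexp : ∀ u v : V, q (u + v) = q u + q v + B u v := by
    intro u v
    simp only [hBdef, QuadraticMap.polarBilin_apply_apply, QuadraticMap.polar]
    ring
  have hsymm : ∀ u v : V, B u v = B v u := by
    intro u v
    simp only [hBdef, QuadraticMap.polarBilin_apply_apply]
    exact QuadraticMap.polar_comm _ _ _
  set σ := τ - LinearMap.id with hσdef
  have hσa : σ a = x := by simp [hσdef, LinearMap.sub_apply, ha]
  have hσb : σ b = w := by simp [hσdef, LinearMap.sub_apply, hb]
  have hσx : σ x = 0 := by
    have h := LinearMap.congr_fun h2 a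
    rwa [LinearMap.comp_apply, hσa, LinearMap.zero_apply] at h
  have hσw : σ w = 0 := by
    have h := LinearMap.congr_fun h2 b
    rwa [LinearMap.comp_apply, hσb, LinearMap.zero_apply] at h
  have hτx : τ x = x := by
    have h := hσx
    rw [hσdef] at h
    simpa [LinearMap.sub_apply, sub_eq_zero] using h
  have hτw : τ w = w := by
    have h := hσw
    rw [hσdef] at h
    simpa [LinearMap.sub_apply, sub_eq_zero] using h
  have hτa : τ a = x + a := sub_eq_iff_eq_add.mp ha
  have hτb : τ b = w + b := sub_eq_iff_eq_add.mp hb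
  have hqx : q x = 0 := by
    have h := hτ a
    rw [hτa, hexp x a, hxx] at h
    linear_combination h
  have hqw : q w = 0 := by
    have h := hτ b
    rw [hτb, hexp w b, hww] at h
    linear_combination h
  have hBxw : B x w = 0 := by
    have h := hτ (a + b)
    have e1 : τ (a + b) = (x + w) + (a + b) := by rw [map_add, hτa, hτb]; abel
    rw [e1, hexp (x + w) (a + b), hexp x w, hexp a b] at h
    simp only [map_add, LinearMap.add_apply, hxx, hxw, hwx, hww, hqx, hqw] at h
    linear_combination h
  have hBwx : B w x = 0 := by rw [hsymm w x]; exact hBxw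
  have hBxx : B x x = 0 := by
    simp only [hBdef, QuadraticMap.polarBilin_apply_apply, QuadraticMap.polar_self, hqx, smul_zero]
  have hBww : B w w = 0 := by
    simp only [hBdef, QuadraticMap.polarBilin_apply_apply, QuadraticMap.polar_self, hqw, smul_zero]
  have hBax : B a x = 0 := by rw [hsymm a x]; exact hxx
  have hBbw : B b w = 0 := by rw [hsymm b w]; exact hww
  have hBbx : B b x = 1 := by rw [hsymm b x]; exact hxw
  have hBaw : B a w = -1 := by rw [hsymm a w]; exact hwx
  have hpair := LinearIndependent.pair_iff.mp hind
  -- the four-dimensional space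
  set V' : Submodule F V := Submodule.span F (Set.range ![x, w, a, b]) with hV'def
  have hxV : x ∈ V' := Submodule.subset_span ⟨0, rfl⟩
  have hwV : w ∈ V' := Submodule.subset_span ⟨1, rfl⟩
  have haV : a ∈ V' := Submodule.subset_span ⟨2, rfl⟩
  have hbV : b ∈ V' := Submodule.subset_span ⟨3, rfl⟩
  have hxU : x ∈ U := by rw [← hspan]; exact Submodule.subset_span (by simp)
  have hwU : w ∈ U := by rw [← hspan]; exact Submodule.subset_span (by simp)
  -- linear independence
  have hli : LinearIndependent F ![x, w, a, b] := by
    rw [Fintype.linearIndependent_iff]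
    intro g hg
    rw [Fin.sum_univ_four] at hg
    simp only [Matrix.cons_val_zero, Matrix.cons_val_one, Matrix.head_cons,
      Matrix.cons_val_two, Matrix.tail_cons, Matrix.cons_val_three] at hg
    have h3 : g 3 = 0 := by
      have h := congrArg (fun v => B v x) hg
      simpa [map_add, map_smul, LinearMap.add_apply, LinearMap.smul_apply,
        smul_eq_mul, hBxx, hBwx, hBax, hBbx] using h
    have h2' : g 2 = 0 := by
      have h := congrArg (fun v => B v w) hg
      simpa [map_add, map_smul, LinearMap.add_apply, LinearMap.smul_apply,
        smul_eq_mul, hBxw, hBww, hBaw, hBbw, neg_eq_zero] using h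
    rw [h3, h2'] at hg
    simp only [zero_smul, add_zero] at hg
    obtain ⟨h0, h1⟩ := hpair (g 0) (g 1) hg
    intro i
    fin_cases i <;> simp [h0, h1, h2', h3]
  have hrank : Module.finrank F V' = 4 := by
    rw [hV'def, finrank_span_eq_card hli]
    simp
  -- regularity
  have hreg : V' ⊓ LinearMap.BilinForm.orthogonal B V' = ⊥ := by
    rw [eq_bot_iff]
    rintro v ⟨hv1, hv2⟩
    rw [Submodule.mem_bot]
    obtain ⟨c, hc⟩ := (Submodule.mem_span_range_iff_exists_fun F).mp hv1
    rw [Fin.sum_univ_four] at hc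
    simp only [Matrix.cons_val_zero, Matrix.cons_val_one, Matrix.head_cons,
      Matrix.cons_val_two, Matrix.tail_cons, Matrix.cons_val_three] at hc
    have horth : ∀ n ∈ V', B n v = 0 := fun n hn =>
      (LinearMap.BilinForm.mem_orthogonal_iff.mp hv2) n hn
    have h3 : c 3 = 0 := by
      have h := horth x hxV
      rw [← hc] at h
      simpa [map_add, map_smul, smul_eq_mul, hBxx, hBxw, hxx, hxw] using h
    have h2' : c 2 = 0 := by
      have h := horth w hwV
      rw [← hc] at h
      simpa [map_add, map_smul, smul_eq_mul, hBwx, hBww, hwx, hww, neg_eq_zero] using h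
    rw [h3, h2'] at hc
    simp only [zero_smul, add_zero] at hc
    have h1 : c 1 = 0 := by
      have h := horth a haV
      rw [← hc] at h
      simpa [map_add, map_smul, smul_eq_mul, hBax, hBaw, neg_eq_zero] using h
    have h0 : c 0 = 0 := by
      have h := horth b hbV
      rw [← hc] at h
      simpa [map_add, map_smul, smul_eq_mul, hBbx, hBbw] using h
    rw [h0, h1] at hc
    simp only [zero_smul, add_zero] at hc
    exact hc.symm
  -- τ-invariance
  have hτmem : ∀ v ∈ V', τ v ∈ V' := by
    have hle : Submodule.map τ V' ≤ V' := by
      rw [hV'def, Submodule.map_span_le]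
      rintro m ⟨i, rfl⟩
      fin_cases i
      · show τ x ∈ V'
        rw [hτx]; exact hxV
      · show τ w ∈ V'
        rw [hτw]; exact hwV
      · show τ a ∈ V'
        rw [hτa]; exact Submodule.add_mem _ hxV haV
      · show τ b ∈ V'
        rw [hτb]; exact Submodule.add_mem _ hwV hbV
    intro v hv
    exact hle (Submodule.mem_map_of_mem hv)
  -- image
  have hmap : Submodule.map σ V' = U := by
    apply le_antisymm
    · rw [hV'def, Submodule.map_span_le]
      rintro m ⟨i, rfl⟩
      fin_cases i
      · show σ x ∈ U
        rw [hσx]; exact Submodule.zero_mem U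
      · show σ w ∈ U
        rw [hσw]; exact Submodule.zero_mem U
      · show σ a ∈ U
        rw [hσa]; exact hxU
      · show σ b ∈ U
        rw [hσb]; exact hwU
    · rw [← hspan, Submodule.span_le]
      rintro y hy
      rcases hy with rfl | hy
      · exact ⟨a, haV, hσa⟩
      · rcases hy with rfl
        exact ⟨b, hbV, hσb⟩
  -- kernel
  have hker : LinearMap.ker σ ⊓ V' = U := by
    apply le_antisymm
    · rintro v ⟨hv1, hv2⟩
      obtain ⟨c, hc⟩ := (Submodule.mem_span_range_iff_exists_fun F).mp hv2
      rw [Fin.sum_univ_four] at hc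
      simp only [Matrix.cons_val_zero, Matrix.cons_val_one, Matrix.head_cons,
        Matrix.cons_val_two, Matrix.tail_cons, Matrix.cons_val_three] at hc
      have hσv : σ v = c 2 • x + c 3 • w := by
        rw [← hc]
        simp [map_add, map_smul, hσx, hσw, hσa, hσb]
      rw [LinearMap.mem_ker.mp hv1] at hσv
      obtain ⟨h2', h3⟩ := hpair (c 2) (c 3) hσv.symm
      rw [h2', h3] at hc
      simp only [zero_smul, add_zero] at hc
      rw [← hspan]
      exact Submodule.mem_span_pair.mpr ⟨c 0, c 1, hc⟩
    · rw [← hspan, Submodule.span_le]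
      rintro y hy
      rcases hy with rfl | hy
      · exact ⟨LinearMap.mem_ker.mpr hσx, hxV⟩
      · rcases hy with rfl
        exact ⟨LinearMap.mem_ker.mpr hσw, hwV⟩
  refine ⟨V', hrank, hreg, hτmem, hmap, ?_, ?_⟩
  · rw [hker]; exact hU2
  · intro v hv
    rw [hker, ← hspan] at hv
    obtain ⟨s, t, hst⟩ := Submodule.mem_span_pair.mp hv
    rw [← hst, hexp (s • x) (t • w)]
    rw [QuadraticMap.map_smul, QuadraticMap.map_smul, hqx, hqw]
    simp only [map_smul, LinearMap.smul_apply, smul_eq_mul, hBxw]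
    ring
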